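/- arXiv:1907.02654 — 2 statements merged into one kernel-verified Lean document; each statement's English description precedes it below -/
import Mathlib

section
/- Let ℓ : [0,T] × ℝᵈ × ℝᵏ → ℝ be continuous and satisfy c₀|u|² − c₁ ≤ ℓ(t,x,u) ≤ c₁ + (1/c₀)|u|² and |ℓ(t,x,u) − ℓ(t,y,u)| ≤ c₂(1+|u|)|x−y| for all t, x, y, u (c₀ > 0, c₁, c₂ ≥ 0), and let g : ℝᵈ → ℝ be bounded and Lipschitz. Define the value function V(t,x) = inf_{u ∈ L²(t,T;ℝᵏ)} { ∫ₜᵀ ℓ(s, γ(s), u(s)) ds + g(γ(T)) }, where γ(s) = e^{(s−t)A}x + ∫ₜˢ e^{(s−τ)A}B u(τ) dτ. Assume moreover that for every R > 0 there is κ_R ≥ 0 such that for every (t,x) ∈ [0,T] × B̄_R the infimum is attained by some control u* with ‖u*‖_{L^∞(t,T)} ≤ κ_R. Then V is locally Lipschitz continuous on [0,T] × ℝᵈ: for every R > 0 there exists C_R ≥ 0 such that |V(t,x) − V(s,y)| ≤ C_R(|x−y| + |t−s|) for all t, s ∈ [0,T] and x, y ∈ B̄_R. -/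
/- STATEMENT 10: local Lipschitz continuity of the value function of the optimal
control problem underlying a mild solution (Theorem `Vlipschitz`). -/

open MeasureTheory Set

/-- The trajectory started from `x` at time `t`: `γ(s) = e^{(s-t)A}x + ∫ₜˢ e^{(s-τ)A}Bu(τ)dτ`. -/
noncomputable def trajFrom {d k : ℕ}
    (A : EuclideanSpace ℝ (Fin d) →L[ℝ] EuclideanSpace ℝ (Fin d))
    (B : EuclideanSpace ℝ (Fin k) →L[ℝ] EuclideanSpace ℝ (Fin d))
    (t : ℝ) (x : EuclideanSpace ℝ (Fin d)) (u : ℝ → EuclideanSpace ℝ (Fin k)) (s : ℝ) :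
    EuclideanSpace ℝ (Fin d) :=
  NormedSpace.exp ((s - t) • A) x +
    ∫ τ in Set.Ioc t s, NormedSpace.exp ((s - τ) • A) (B (u τ))

/-- The cost of the control `u` starting from `x` at time `t`. -/
noncomputable def costFrom {d k : ℕ} (T : ℝ)
    (A : EuclideanSpace ℝ (Fin d) →L[ℝ] EuclideanSpace ℝ (Fin d))
    (B : EuclideanSpace ℝ (Fin k) →L[ℝ] EuclideanSpace ℝ (Fin d))
    (ℓ : ℝ → EuclideanSpace ℝ (Fin d) → EuclideanSpace ℝ (Fin k) → ℝ)
    (g : EuclideanSpace ℝ (Fin d) → ℝ)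
    (t : ℝ) (x : EuclideanSpace ℝ (Fin d)) (u : ℝ → EuclideanSpace ℝ (Fin k)) : ℝ :=
  (∫ s in Set.Ioc t T, ℓ s (trajFrom A B t x u s) (u s)) + g (trajFrom A B t x u T)

/-- The value function `V(t,x) = inf_{u ∈ L²(t,T;ℝᵏ)} costFrom t x u`. -/
noncomputable def valueFun {d k : ℕ} (T : ℝ)
    (A : EuclideanSpace ℝ (Fin d) →L[ℝ] EuclideanSpace ℝ (Fin d))
    (B : EuclideanSpace ℝ (Fin k) →L[ℝ] EuclideanSpace ℝ (Fin d))
    (ℓ : ℝ → EuclideanSpace ℝ (Fin d) → EuclideanSpace ℝ (Fin k) → ℝ)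
    (g : EuclideanSpace ℝ (Fin d) → ℝ)
    (t : ℝ) (x : EuclideanSpace ℝ (Fin d)) : ℝ :=
  sInf ((fun u => costFrom T A B ℓ g t x u) ''
    {u : ℝ → EuclideanSpace ℝ (Fin k) | MemLp u 2 (volume.restrict (Set.Ioc t T))})

variable {d k : ℕ}

local notation "E" => EuclideanSpace ℝ (Fin d)
local notation "F" => EuclideanSpace ℝ (Fin k)

lemma norm_expCLM_le (X : E →L[ℝ] E) : ‖NormedSpace.exp X‖ ≤ Real.exp ‖X‖ := by
  have h1 := NormedSpace.exp_series_hasSum_exp' (𝕂 := ℝ) X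
  have h2 : HasSum (fun n => ((n.factorial : ℝ))⁻¹ • ‖X‖ ^ n) (Real.exp ‖X‖) := by
    rw [Real.exp_eq_exp_ℝ]; exact NormedSpace.exp_series_hasSum_exp' ‖X‖
  rw [← h1.tsum_eq]
  refine le_trans (norm_tsum_le_tsum_norm (NormedSpace.norm_expSeries_summable' X)) ?_
  rw [← h2.tsum_eq]
  refine Summable.tsum_le_tsum (fun n => ?_) (NormedSpace.norm_expSeries_summable' X) h2.summable
  have h3 : ‖((n.factorial : ℝ))⁻¹ • X ^ n‖ = ((n.factorial : ℝ))⁻¹ * ‖X ^ n‖ := by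
    have h := norm_smul ((n.factorial : ℝ))⁻¹ (X ^ n)
    rw [h, Real.norm_eq_abs, abs_of_nonneg (by positivity)]
  rw [h3, smul_eq_mul]
  refine mul_le_mul_of_nonneg_left ?_ (by positivity)
  cases n with
  | zero => rw [pow_zero, pow_zero, ContinuousLinearMap.one_def]; exact ContinuousLinearMap.norm_id_le
  | succ m => exact norm_pow_le' X m.succ_pos

lemma norm_exp_smul_le (A : E →L[ℝ] E) {T r : ℝ} (hr : |r| ≤ T) :
    ‖NormedSpace.exp (r • A)‖ ≤ Real.exp (T * ‖A‖) := by
  refine (norm_expCLM_le _).trans (Real.exp_le_exp.2 ?_)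
  have : ‖r • A‖ = |r| * ‖A‖ := by
    have h := norm_smul r A; rw [h, Real.norm_eq_abs]
  rw [this]
  exact mul_le_mul_of_nonneg_right hr (norm_nonneg _)

lemma norm_exp_smul_sub_le (A : E →L[ℝ] E) {T r r' : ℝ} (hT : 0 ≤ T)
    (hr : r ∈ Icc (-T) T) (hr' : r' ∈ Icc (-T) T) :
    ‖NormedSpace.exp (r • A) - NormedSpace.exp (r' • A)‖ ≤
      (‖A‖ * Real.exp (T * ‖A‖)) * |r - r'| := by
  have key := Convex.norm_image_sub_le_of_norm_hasDerivWithin_le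
    (f := fun t : ℝ => NormedSpace.exp (t • A))
    (f' := fun t : ℝ => NormedSpace.exp (t • A) * A) (s := Icc (-T) T)
    (C := ‖A‖ * Real.exp (T * ‖A‖))
    (fun t _ => (hasDerivAt_exp_smul_const A t).hasDerivWithinAt)
    (fun t ht => ?_) (convex_Icc _ _) hr' hr
  · simp only [Real.norm_eq_abs] at key
    exact key
  · show ‖NormedSpace.exp (t • A) * A‖ ≤ ‖A‖ * Real.exp (T * ‖A‖)
    rw [ContinuousLinearMap.mul_def]
    calc ‖(NormedSpace.exp (t • A)).comp A‖ ≤ ‖NormedSpace.exp (t • A)‖ * ‖A‖ :=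
        ContinuousLinearMap.opNorm_comp_le _ _
    _ ≤ Real.exp (T * ‖A‖) * ‖A‖ := by
        gcongr; exact norm_exp_smul_le A (abs_le.2 ⟨ht.1, ht.2⟩)
    _ = ‖A‖ * Real.exp (T * ‖A‖) := mul_comm _ _

section helpers

variable {A : E →L[ℝ] E} {B : F →L[ℝ] E}

lemma cont_apply {G : ℝ → E →L[ℝ] E} (hG : Continuous G) {v : ℝ → E} (hv : Continuous v) :
    Continuous fun τ => G τ (v τ) :=
  isBoundedBilinearMap_apply.continuous.comp (hG.prodMk hv)

lemma sm_apply {G : ℝ → E →L[ℝ] E} (hG : Continuous G) {v : ℝ → E} (hv : StronglyMeasurable v) :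
    StronglyMeasurable fun τ => G τ (v τ) :=
  isBoundedBilinearMap_apply.continuous.comp_stronglyMeasurable
    (hG.stronglyMeasurable.prodMk hv)

lemma cont_exp_comp {f : ℝ → ℝ} (hf : Continuous f) (A : E →L[ℝ] E) :
    Continuous fun τ => NormedSpace.exp (f τ • A) := by
  letI : NormedAlgebra ℚ (E →L[ℝ] E) := NormedAlgebra.restrictScalars ℚ ℝ _
  exact NormedSpace.exp_continuous.comp (hf.smul continuous_const)

lemma exp_split (A : E →L[ℝ] E) (s τ : ℝ) :
    NormedSpace.exp ((s - τ) • A) =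
      (NormedSpace.exp (s • A)).comp (NormedSpace.exp ((-τ) • A)) := by
  letI : NormedAlgebra ℚ (E →L[ℝ] E) := NormedAlgebra.restrictScalars ℚ ℝ _
  have hc : Commute (s • A) ((-τ) • A) := by
    unfold Commute SemiconjBy
    rw [ContinuousLinearMap.mul_def, ContinuousLinearMap.mul_def,
      ContinuousLinearMap.smul_comp, ContinuousLinearMap.comp_smul,
      ContinuousLinearMap.smul_comp, ContinuousLinearMap.comp_smul, smul_comm]
  rw [← ContinuousLinearMap.mul_def, ← NormedSpace.exp_add_of_commute hc]
  congr 1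
  module

lemma integrand_sm (A : E →L[ℝ] E) (B : F →L[ℝ] E) {u : ℝ → F} (hu : StronglyMeasurable u)
    (s : ℝ) : StronglyMeasurable fun τ => NormedSpace.exp ((s - τ) • A) (B (u τ)) :=
  sm_apply (cont_exp_comp (continuous_const.sub continuous_id) A)
    (B.continuous.comp_stronglyMeasurable hu)

lemma integrand_int (A : E →L[ℝ] E) (B : F →L[ℝ] E) {u : ℝ → F} {κ T : ℝ}
    (hu : StronglyMeasurable u) (huκ : ∀ τ, ‖u τ‖ ≤ κ) {a b s : ℝ}
    (h : ∀ τ ∈ Ioc a b, |s - τ| ≤ T) :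
    IntegrableOn (fun τ => NormedSpace.exp ((s - τ) • A) (B (u τ))) (Ioc a b) := by
  refine Integrable.mono' (g := fun _ => Real.exp (T * ‖A‖) * (‖B‖ * κ))
    (integrableOn_const measure_Ioc_lt_top.ne)
    (integrand_sm A B hu s).aestronglyMeasurable ?_
  filter_upwards [ae_restrict_mem measurableSet_Ioc] with τ hτ
  calc ‖NormedSpace.exp ((s - τ) • A) (B (u τ))‖
      ≤ ‖NormedSpace.exp ((s - τ) • A)‖ * ‖B (u τ)‖ := ContinuousLinearMap.le_opNorm _ _
    _ ≤ Real.exp (T * ‖A‖) * (‖B‖ * κ) := by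
        have h1 : ‖B (u τ)‖ ≤ ‖B‖ * κ :=
          (B.le_opNorm _).trans (mul_le_mul_of_nonneg_left (huκ τ) (norm_nonneg _))
        exact mul_le_mul (norm_exp_smul_le A (h τ hτ)) h1 (norm_nonneg _) (Real.exp_pos _).le

end helpers

section traj

variable {A : E →L[ℝ] E} {B : F →L[ℝ] E}

lemma traj_sub_same (A : E →L[ℝ] E) (B : F →L[ℝ] E) (t : ℝ) (x y : E)
    (u : ℝ → F) (s : ℝ) :
    trajFrom A B t x u s - trajFrom A B t y u s = NormedSpace.exp ((s - t) • A) (x - y) := by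
  unfold trajFrom
  rw [add_sub_add_right_eq_sub, ← map_sub]

lemma traj_eq_cont (A : E →L[ℝ] E) (B : F →L[ℝ] E) {u : ℝ → F} {κ T : ℝ}
    (hu : StronglyMeasurable u) (huκ : ∀ τ, ‖u τ‖ ≤ κ) (t : ℝ) (x : E)
    (ht0 : 0 ≤ t) (htT : t ≤ T) :
    ∃ γ : ℝ → E, ContinuousOn γ (Icc t T) ∧ ∀ σ ∈ Icc t T, trajFrom A B t x u σ = γ σ := by
  set h : ℝ → E := fun τ => NormedSpace.exp ((-τ) • A) (B (u τ)) with hh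
  have hsm : StronglyMeasurable h :=
    sm_apply (cont_exp_comp continuous_neg A) (B.continuous.comp_stronglyMeasurable hu)
  have hint : IntegrableOn h (Icc t T) := by
    refine Integrable.mono' (g := fun _ => Real.exp (T * ‖A‖) * (‖B‖ * κ))
      (integrableOn_const measure_Icc_lt_top.ne) hsm.aestronglyMeasurable ?_
    filter_upwards [ae_restrict_mem measurableSet_Icc] with τ hτ
    calc ‖NormedSpace.exp ((-τ) • A) (B (u τ))‖
        ≤ ‖NormedSpace.exp ((-τ) • A)‖ * ‖B (u τ)‖ := ContinuousLinearMap.le_opNorm _ _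
      _ ≤ Real.exp (T * ‖A‖) * (‖B‖ * κ) := by
          have h1 : ‖B (u τ)‖ ≤ ‖B‖ * κ :=
            (B.le_opNorm _).trans (mul_le_mul_of_nonneg_left (huκ τ) (norm_nonneg _))
          have h2 : |(-τ)| ≤ T := by
            rw [abs_neg, abs_of_nonneg (ht0.trans hτ.1)]; exact hτ.2
          exact mul_le_mul (norm_exp_smul_le A h2) h1 (norm_nonneg _) (Real.exp_pos _).le
  refine ⟨fun σ => NormedSpace.exp ((σ - t) • A) x +
      NormedSpace.exp (σ • A) (∫ τ in Ioc t σ, h τ), ?_, ?_⟩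
  · refine ContinuousOn.add ?_ ?_
    · exact (cont_apply (cont_exp_comp (continuous_id.sub continuous_const) A)
        continuous_const).continuousOn
    · exact isBoundedBilinearMap_apply.continuous.comp_continuousOn
        (((cont_exp_comp continuous_id A).continuousOn).prodMk
          (intervalIntegral.continuousOn_primitive hint))
  · intro σ hσ
    unfold trajFrom
    congr 1
    calc (∫ τ in Ioc t σ, NormedSpace.exp ((σ - τ) • A) (B (u τ)))
        = ∫ τ in Ioc t σ, NormedSpace.exp (σ • A) (h τ) := by
          refine setIntegral_congr_fun measurableSet_Ioc fun τ _ => ?_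
          rw [hh]; rw [exp_split A σ τ]; rfl
      _ = NormedSpace.exp (σ • A) (∫ τ in Ioc t σ, h τ) := by
          refine ContinuousLinearMap.integral_comp_comm _ ?_
          exact hint.mono_set (Ioc_subset_Icc_self.trans (Icc_subset_Icc_right hσ.2))

end traj

section traj2

lemma key_int_le {a b c : ℝ} (hab : a ≤ b) {f1 f2 : ℝ → ℝ}
    (h1 : IntegrableOn f1 (Ioc a b)) (h2 : IntegrableOn f2 (Ioc a b))
    (hc : ∀ σ ∈ Ioc a b, f1 σ - f2 σ ≤ c) (hc0 : 0 ≤ c) :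
    (∫ σ in Ioc a b, f1 σ) - ∫ σ in Ioc a b, f2 σ ≤ c * (b - a) := by
  rw [← integral_sub h1 h2]
  calc (∫ σ in Ioc a b, (f1 σ - f2 σ))
      ≤ ∫ _ in Ioc a b, c := by
        refine setIntegral_mono_on (h1.sub h2)
          (integrableOn_const measure_Ioc_lt_top.ne) measurableSet_Ioc hc
    _ = c * (b - a) := by
        rw [setIntegral_const, Real.volume_real_Ioc_of_le hab,
          smul_eq_mul, mul_comm]

lemma traj_time_diff {d k : ℕ} {A : EuclideanSpace ℝ (Fin d) →L[ℝ] EuclideanSpace ℝ (Fin d)}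
    {B : EuclideanSpace ℝ (Fin k) →L[ℝ] EuclideanSpace ℝ (Fin d)} {u : ℝ → EuclideanSpace ℝ (Fin k)}
    {κ T : ℝ} (hu : StronglyMeasurable u) (huκ : ∀ τ, ‖u τ‖ ≤ κ)
    {t s : ℝ} (hts : t ≤ s) (hsT : s ≤ T) (y : EuclideanSpace ℝ (Fin d))
    {σ : ℝ} (hσ : σ ∈ Icc s T) (hσT : ∀ τ ∈ Ioc t σ, |σ - τ| ≤ T) :
    trajFrom A B t y u σ - trajFrom A B s y u σ =
      (NormedSpace.exp ((σ - t) • A) y - NormedSpace.exp ((σ - s) • A) y) +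
        ∫ τ in Ioc t s, NormedSpace.exp ((σ - τ) • A) (B (u τ)) := by
  unfold trajFrom
  have hsplit : Ioc t σ = Ioc t s ∪ Ioc s σ := (Ioc_union_Ioc_eq_Ioc hts hσ.1).symm
  have hint1 : IntegrableOn (fun τ => NormedSpace.exp ((σ - τ) • A) (B (u τ))) (Ioc t s) :=
    integrand_int A B hu huκ fun τ hτ => hσT τ ⟨hτ.1, hτ.2.trans hσ.1⟩
  have hint2 : IntegrableOn (fun τ => NormedSpace.exp ((σ - τ) • A) (B (u τ))) (Ioc s σ) :=
    integrand_int A B hu huκ fun τ hτ => hσT τ ⟨hts.trans_lt hτ.1, hτ.2⟩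
  rw [hsplit, setIntegral_union ((Ioc_disjoint_Ioc_of_le le_rfl)) measurableSet_Ioc hint1 hint2]
  abel

end traj2

section ell

variable {d k : ℕ} {A : EuclideanSpace ℝ (Fin d) →L[ℝ] EuclideanSpace ℝ (Fin d)}
  {B : EuclideanSpace ℝ (Fin k) →L[ℝ] EuclideanSpace ℝ (Fin d)}
  {ℓ : ℝ → EuclideanSpace ℝ (Fin d) → EuclideanSpace ℝ (Fin k) → ℝ}
  {c₀ c₁ : ℝ}

lemma abs_ell_le (hc₀ : 0 < c₀) (hc₁ : 0 ≤ c₁)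
    (hgrowth : ∀ t x u, c₀ * ‖u‖ ^ 2 - c₁ ≤ ℓ t x u ∧ ℓ t x u ≤ c₁ + (1 / c₀) * ‖u‖ ^ 2)
    {κ : ℝ} (σ : ℝ) (X : EuclideanSpace ℝ (Fin d)) {v : EuclideanSpace ℝ (Fin k)}
    (hv : ‖v‖ ≤ κ) : |ℓ σ X v| ≤ c₁ + (1 / c₀) * κ ^ 2 := by
  have h := hgrowth σ X v
  have hv2 : ‖v‖ ^ 2 ≤ κ ^ 2 := by
    have := norm_nonneg v
    nlinarith
  have h10 : (0:ℝ) ≤ 1 / c₀ := by positivity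
  rw [abs_le]
  constructor
  · nlinarith [sq_nonneg ‖v‖, h.1]
  · nlinarith [h.2]

lemma ell_integrand_integrable
    (hcont : Continuous fun p : ℝ × EuclideanSpace ℝ (Fin d) × EuclideanSpace ℝ (Fin k) =>
      ℓ p.1 p.2.1 p.2.2)
    (hc₀ : 0 < c₀) (hc₁ : 0 ≤ c₁)
    (hgrowth : ∀ t x u, c₀ * ‖u‖ ^ 2 - c₁ ≤ ℓ t x u ∧ ℓ t x u ≤ c₁ + (1 / c₀) * ‖u‖ ^ 2)
    {u : ℝ → EuclideanSpace ℝ (Fin k)} {κ T : ℝ}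
    (hu : StronglyMeasurable u) (huκ : ∀ τ, ‖u τ‖ ≤ κ)
    {t : ℝ} (ht0 : 0 ≤ t) (htT : t ≤ T) (x : EuclideanSpace ℝ (Fin d)) :
    IntegrableOn (fun σ => ℓ σ (trajFrom A B t x u σ) (u σ)) (Ioc t T) := by
  obtain ⟨γ, hγc, hγe⟩ := traj_eq_cont A B hu huκ t x ht0 htT
  have hsm : AEStronglyMeasurable (fun σ => ℓ σ (γ σ) (u σ))
      (volume.restrict (Ioc t T)) := by
    have hγm : AEStronglyMeasurable γ (volume.restrict (Ioc t T)) := by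
      refine ContinuousOn.aestronglyMeasurable (hγc.mono Ioc_subset_Icc_self) measurableSet_Ioc
    exact hcont.comp_aestronglyMeasurable
      (stronglyMeasurable_id.aestronglyMeasurable.prodMk
        (hγm.prodMk hu.aestronglyMeasurable.restrict))
  have hsm' : AEStronglyMeasurable (fun σ => ℓ σ (trajFrom A B t x u σ) (u σ))
      (volume.restrict (Ioc t T)) := by
    refine hsm.congr ?_
    filter_upwards [ae_restrict_mem measurableSet_Ioc] with σ hσ
    rw [hγe σ (Ioc_subset_Icc_self hσ)]
  refine Integrable.mono' (g := fun _ => c₁ + (1 / c₀) * κ ^ 2)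
    (integrableOn_const measure_Ioc_lt_top.ne) hsm' ?_
  filter_upwards with σ
  rw [Real.norm_eq_abs]
  exact abs_ell_le hc₀ hc₁ hgrowth σ _ (huκ σ)

end ell

section cost

variable {d k : ℕ} {A : EuclideanSpace ℝ (Fin d) →L[ℝ] EuclideanSpace ℝ (Fin d)}
  {B : EuclideanSpace ℝ (Fin k) →L[ℝ] EuclideanSpace ℝ (Fin d)}
  {ℓ : ℝ → EuclideanSpace ℝ (Fin d) → EuclideanSpace ℝ (Fin k) → ℝ}
  {g : EuclideanSpace ℝ (Fin d) → ℝ}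
  {c₀ c₁ c₂ : ℝ} {Kg : NNReal} {T : ℝ}

lemma cost_diff_x
    (hcont : Continuous fun p : ℝ × EuclideanSpace ℝ (Fin d) × EuclideanSpace ℝ (Fin k) =>
      ℓ p.1 p.2.1 p.2.2)
    (hc₀ : 0 < c₀) (hc₁ : 0 ≤ c₁) (hc₂ : 0 ≤ c₂)
    (hgrowth : ∀ t x u, c₀ * ‖u‖ ^ 2 - c₁ ≤ ℓ t x u ∧ ℓ t x u ≤ c₁ + (1 / c₀) * ‖u‖ ^ 2)
    (hlip : ∀ t x y u, |ℓ t x u - ℓ t y u| ≤ c₂ * (1 + ‖u‖) * ‖x - y‖)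
    (hgl : LipschitzWith Kg g)
    {u : ℝ → EuclideanSpace ℝ (Fin k)} {κ : ℝ}
    (hu : StronglyMeasurable u) (huκ : ∀ τ, ‖u τ‖ ≤ κ)
    {t : ℝ} (ht : t ∈ Icc (0:ℝ) T) (x y : EuclideanSpace ℝ (Fin d)) :
    costFrom T A B ℓ g t x u - costFrom T A B ℓ g t y u ≤
      ((c₂ * (1 + κ) * T + (Kg:ℝ)) * Real.exp (T * ‖A‖)) * ‖x - y‖ := by
  have hκ0 : 0 ≤ κ := (norm_nonneg _).trans (huκ 0)
  set M := Real.exp (T * ‖A‖) with hM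
  have hM0 : 0 < M := Real.exp_pos _
  have hTnn : 0 ≤ T := ht.1.trans ht.2
  -- trajectory difference bound
  have htraj : ∀ σ ∈ Icc t T,
      ‖trajFrom A B t x u σ - trajFrom A B t y u σ‖ ≤ M * ‖x - y‖ := by
    intro σ hσ
    rw [traj_sub_same]
    refine (ContinuousLinearMap.le_opNorm _ _).trans ?_
    refine mul_le_mul_of_nonneg_right ?_ (norm_nonneg _)
    refine norm_exp_smul_le A ?_
    rw [abs_of_nonneg (sub_nonneg.2 hσ.1)]
    linarith [hσ.2, ht.1]
  have hint1 := ell_integrand_integrable (A := A) (B := B) hcont hc₀ hc₁ hgrowth hu huκ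
    ht.1 ht.2 x
  have hint2 := ell_integrand_integrable (A := A) (B := B) hcont hc₀ hc₁ hgrowth hu huκ
    ht.1 ht.2 y
  have hIkey : (∫ σ in Ioc t T, ℓ σ (trajFrom A B t x u σ) (u σ)) -
      (∫ σ in Ioc t T, ℓ σ (trajFrom A B t y u σ) (u σ)) ≤
      (c₂ * (1 + κ) * (M * ‖x - y‖)) * (T - t) := by
    refine key_int_le ht.2 hint1 hint2 (fun σ hσ => ?_) (by positivity)
    refine (le_abs_self _).trans ((hlip σ _ _ _).trans ?_)
    have h1 : (1 + ‖u σ‖) ≤ 1 + κ := by linarith [huκ σ]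
    have h2 := htraj σ (Ioc_subset_Icc_self hσ)
    exact mul_le_mul (mul_le_mul_of_nonneg_left h1 hc₂) h2 (norm_nonneg _) (by positivity)
  have hg : g (trajFrom A B t x u T) - g (trajFrom A B t y u T) ≤ (Kg:ℝ) * (M * ‖x - y‖) := by
    refine (le_abs_self _).trans ?_
    rw [← Real.dist_eq]
    refine (hgl.dist_le_mul _ _).trans ?_
    rw [dist_eq_norm]
    exact mul_le_mul_of_nonneg_left (htraj T ⟨ht.2, le_rfl⟩) (NNReal.coe_nonneg _)
  have hTt : T - t ≤ T := by linarith [ht.1]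
  have : (c₂ * (1 + κ) * (M * ‖x - y‖)) * (T - t) ≤ (c₂ * (1 + κ) * (M * ‖x - y‖)) * T :=
    mul_le_mul_of_nonneg_left hTt (by positivity)
  have hring : ((c₂ * (1 + κ) * T + (Kg:ℝ)) * M) * ‖x - y‖ =
      (c₂ * (1 + κ) * (M * ‖x - y‖)) * T + (Kg:ℝ) * (M * ‖x - y‖) := by ring
  unfold costFrom
  linarith [hIkey, hg, this]

end cost

section cost2

variable {d k : ℕ} {A : EuclideanSpace ℝ (Fin d) →L[ℝ] EuclideanSpace ℝ (Fin d)}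
  {B : EuclideanSpace ℝ (Fin k) →L[ℝ] EuclideanSpace ℝ (Fin d)}
  {ℓ : ℝ → EuclideanSpace ℝ (Fin d) → EuclideanSpace ℝ (Fin k) → ℝ}
  {g : EuclideanSpace ℝ (Fin d) → ℝ}
  {c₀ c₁ c₂ : ℝ} {Kg : NNReal} {T : ℝ}

lemma exp_apply_sub_bound {t s σ T R : ℝ} (ht0 : 0 ≤ t) (hts : t ≤ s) (hsσ : s ≤ σ)
    (hσT : σ ≤ T) {y : EuclideanSpace ℝ (Fin d)} (hy : ‖y‖ ≤ R) (hR : 0 ≤ R) :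
    ‖NormedSpace.exp ((σ - t) • A) y - NormedSpace.exp ((σ - s) • A) y‖ ≤
      (‖A‖ * Real.exp (T * ‖A‖) * R) * (s - t) := by
  have hT0 : 0 ≤ T := ht0.trans (hts.trans (hsσ.trans hσT))
  have h1 : σ - t ∈ Icc (-T) T := by
    constructor <;> [linarith; linarith]
  have h2 : σ - s ∈ Icc (-T) T := by
    constructor <;> [linarith; linarith]
  calc ‖NormedSpace.exp ((σ - t) • A) y - NormedSpace.exp ((σ - s) • A) y‖
      = ‖(NormedSpace.exp ((σ - t) • A) - NormedSpace.exp ((σ - s) • A)) y‖ := by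
        rw [ContinuousLinearMap.sub_apply]
    _ ≤ ‖NormedSpace.exp ((σ - t) • A) - NormedSpace.exp ((σ - s) • A)‖ * ‖y‖ :=
        ContinuousLinearMap.le_opNorm _ _
    _ ≤ ((‖A‖ * Real.exp (T * ‖A‖)) * |σ - t - (σ - s)|) * R := by
        refine mul_le_mul (norm_exp_smul_sub_le A hT0 h1 h2) hy (norm_nonneg _) ?_
        positivity
    _ = (‖A‖ * Real.exp (T * ‖A‖) * R) * (s - t) := by
        rw [show σ - t - (σ - s) = s - t by ring, abs_of_nonneg (sub_nonneg.2 hts)]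
        ring

lemma cost_diff_time_B
    (hcont : Continuous fun p : ℝ × EuclideanSpace ℝ (Fin d) × EuclideanSpace ℝ (Fin k) =>
      ℓ p.1 p.2.1 p.2.2)
    (hc₀ : 0 < c₀) (hc₁ : 0 ≤ c₁) (hc₂ : 0 ≤ c₂)
    (hgrowth : ∀ t x u, c₀ * ‖u‖ ^ 2 - c₁ ≤ ℓ t x u ∧ ℓ t x u ≤ c₁ + (1 / c₀) * ‖u‖ ^ 2)
    (hlip : ∀ t x y u, |ℓ t x u - ℓ t y u| ≤ c₂ * (1 + ‖u‖) * ‖x - y‖)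
    (hgl : LipschitzWith Kg g)
    {u : ℝ → EuclideanSpace ℝ (Fin k)} {κ : ℝ}
    (hu : StronglyMeasurable u) (huκ : ∀ τ, ‖u τ‖ ≤ κ)
    {t s : ℝ} (ht0 : 0 ≤ t) (hts : t ≤ s) (hsT : s ≤ T)
    {R : ℝ} (hR : 0 ≤ R) {y : EuclideanSpace ℝ (Fin d)} (hy : ‖y‖ ≤ R) :
    costFrom T A B ℓ g s y u - costFrom T A B ℓ g t y u ≤
      (c₁ + (c₂ * (1 + κ) * T + (Kg:ℝ)) *
        (‖A‖ * Real.exp (T * ‖A‖) * R + Real.exp (T * ‖A‖) * ‖B‖ * κ)) * (s - t) := by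
  have hκ0 : 0 ≤ κ := (norm_nonneg _).trans (huκ 0)
  set M := Real.exp (T * ‖A‖) with hM
  have hM0 : 0 < M := Real.exp_pos _
  set CT := ‖A‖ * M * R + M * ‖B‖ * κ with hCT
  have hCT0 : 0 ≤ CT := by positivity
  have hT0 : 0 ≤ T := ht0.trans (hts.trans hsT)
  -- trajectory difference bound
  have htraj : ∀ σ ∈ Icc s T,
      ‖trajFrom A B t y u σ - trajFrom A B s y u σ‖ ≤ CT * (s - t) := by
    intro σ hσ
    have hσT' : ∀ τ ∈ Ioc t σ, |σ - τ| ≤ T := by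
      intro τ hτ
      rw [abs_of_nonneg (by linarith [hτ.2])]
      linarith [hτ.1, hσ.2]
    rw [traj_time_diff hu huκ hts hsT y hσ hσT']
    refine (norm_add_le _ _).trans ?_
    have hb1 := exp_apply_sub_bound (A := A) ht0 hts hσ.1 hσ.2 hy hR
    have hb2 : ‖∫ τ in Ioc t s, NormedSpace.exp ((σ - τ) • A) (B (u τ))‖ ≤
        (M * (‖B‖ * κ)) * (s - t) := by
      have := norm_setIntegral_le_of_norm_le_const (C := M * (‖B‖ * κ))
        (s := Ioc t s) (μ := volume)
        (f := fun τ => NormedSpace.exp ((σ - τ) • A) (B (u τ)))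
        measure_Ioc_lt_top ?_
      · rwa [Real.volume_real_Ioc_of_le hts] at this
      · intro τ hτ
        have habs : |σ - τ| ≤ T := by
          rw [abs_of_nonneg (by linarith [hτ.2, hσ.1])]
          linarith [hτ.1, hσ.2]
        calc ‖NormedSpace.exp ((σ - τ) • A) (B (u τ))‖
            ≤ ‖NormedSpace.exp ((σ - τ) • A)‖ * ‖B (u τ)‖ :=
              ContinuousLinearMap.le_opNorm _ _
          _ ≤ M * (‖B‖ * κ) := by
              refine mul_le_mul (norm_exp_smul_le A habs) ?_ (norm_nonneg _) hM0.le
              exact (B.le_opNorm _).trans (mul_le_mul_of_nonneg_left (huκ τ) (norm_nonneg _))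
    calc ‖NormedSpace.exp ((σ - t) • A) y - NormedSpace.exp ((σ - s) • A) y‖ +
          ‖∫ τ in Ioc t s, NormedSpace.exp ((σ - τ) • A) (B (u τ))‖
        ≤ (‖A‖ * M * R) * (s - t) + (M * (‖B‖ * κ)) * (s - t) := add_le_add hb1 hb2
      _ = CT * (s - t) := by rw [hCT]; ring
  -- integrability
  have hintt := ell_integrand_integrable (A := A) (B := B) hcont hc₀ hc₁ hgrowth hu huκ
    ht0 (hts.trans hsT) y
  have hints := ell_integrand_integrable (A := A) (B := B) hcont hc₀ hc₁ hgrowth hu huκ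
    (ht0.trans hts) hsT y
  have hintt1 : IntegrableOn (fun σ => ℓ σ (trajFrom A B t y u σ) (u σ)) (Ioc t s) :=
    hintt.mono_set (Ioc_subset_Ioc_right hsT)
  have hintt2 : IntegrableOn (fun σ => ℓ σ (trajFrom A B t y u σ) (u σ)) (Ioc s T) :=
    hintt.mono_set (Ioc_subset_Ioc_left hts)
  -- split
  have hsplit : (∫ σ in Ioc t T, ℓ σ (trajFrom A B t y u σ) (u σ)) =
      (∫ σ in Ioc t s, ℓ σ (trajFrom A B t y u σ) (u σ)) +
        ∫ σ in Ioc s T, ℓ σ (trajFrom A B t y u σ) (u σ) := by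
    rw [← setIntegral_union (Ioc_disjoint_Ioc_of_le le_rfl) measurableSet_Ioc hintt1 hintt2,
      Ioc_union_Ioc_eq_Ioc hts hsT]
  -- piece A1
  have hA1 : (∫ σ in Ioc s T, ℓ σ (trajFrom A B s y u σ) (u σ)) -
      (∫ σ in Ioc s T, ℓ σ (trajFrom A B t y u σ) (u σ)) ≤
        (c₂ * (1 + κ) * (CT * (s - t))) * (T - s) := by
    have hst : (0:ℝ) ≤ s - t := sub_nonneg.2 hts
    refine key_int_le hsT hints hintt2 (fun σ hσ => ?_)
      (mul_nonneg (mul_nonneg hc₂ (by linarith)) (mul_nonneg hCT0 hst))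
    refine (le_abs_self _).trans ((hlip σ _ _ _).trans ?_)
    have h1 : (1 + ‖u σ‖) ≤ 1 + κ := by linarith [huκ σ]
    have h2 : ‖trajFrom A B s y u σ - trajFrom A B t y u σ‖ ≤ CT * (s - t) := by
      rw [norm_sub_rev]
      exact htraj σ (Ioc_subset_Icc_self hσ)
    exact mul_le_mul (mul_le_mul_of_nonneg_left h1 hc₂) h2 (norm_nonneg _) (by positivity)
  -- piece A2
  have hA2 : -(∫ σ in Ioc t s, ℓ σ (trajFrom A B t y u σ) (u σ)) ≤ c₁ * (s - t) := by
    have := key_int_le hts (integrableOn_zero (s := Ioc t s)) hintt1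
      (fun σ _ => ?_) hc₁
    · simpa using this
    · have := (hgrowth σ (trajFrom A B t y u σ) (u σ)).1
      nlinarith [sq_nonneg ‖u σ‖, hc₀.le, mul_nonneg hc₀.le (sq_nonneg ‖u σ‖)]
  -- piece A3
  have hA3 : g (trajFrom A B s y u T) - g (trajFrom A B t y u T) ≤ (Kg:ℝ) * (CT * (s - t)) := by
    refine (le_abs_self _).trans ?_
    rw [← Real.dist_eq]
    refine (hgl.dist_le_mul _ _).trans ?_
    rw [dist_eq_norm, norm_sub_rev]
    exact mul_le_mul_of_nonneg_left (htraj T ⟨hsT, le_rfl⟩) (NNReal.coe_nonneg _)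
  have hTs : T - s ≤ T := by linarith
  have hA1' : (∫ σ in Ioc s T, ℓ σ (trajFrom A B s y u σ) (u σ)) -
      (∫ σ in Ioc s T, ℓ σ (trajFrom A B t y u σ) (u σ)) ≤
        (c₂ * (1 + κ) * (CT * (s - t))) * T :=
    hA1.trans (mul_le_mul_of_nonneg_left hTs
      (mul_nonneg (mul_nonneg hc₂ (by linarith)) (mul_nonneg hCT0 (sub_nonneg.2 hts))))
  have hring : (c₁ + (c₂ * (1 + κ) * T + (Kg:ℝ)) * CT) * (s - t) =
      (c₂ * (1 + κ) * (CT * (s - t))) * T + c₁ * (s - t) + (Kg:ℝ) * (CT * (s - t)) := by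
    ring
  unfold costFrom
  rw [hsplit]
  linarith [hA1', hA2, hA3]

end cost2

section cost3

variable {d k : ℕ} {A : EuclideanSpace ℝ (Fin d) →L[ℝ] EuclideanSpace ℝ (Fin d)}
  {B : EuclideanSpace ℝ (Fin k) →L[ℝ] EuclideanSpace ℝ (Fin d)}
  {ℓ : ℝ → EuclideanSpace ℝ (Fin d) → EuclideanSpace ℝ (Fin k) → ℝ}
  {g : EuclideanSpace ℝ (Fin d) → ℝ}
  {c₀ c₁ c₂ : ℝ} {Kg : NNReal} {T : ℝ}

lemma cost_diff_time_A
    (hcont : Continuous fun p : ℝ × EuclideanSpace ℝ (Fin d) × EuclideanSpace ℝ (Fin k) =>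
      ℓ p.1 p.2.1 p.2.2)
    (hc₀ : 0 < c₀) (hc₁ : 0 ≤ c₁) (hc₂ : 0 ≤ c₂)
    (hgrowth : ∀ t x u, c₀ * ‖u‖ ^ 2 - c₁ ≤ ℓ t x u ∧ ℓ t x u ≤ c₁ + (1 / c₀) * ‖u‖ ^ 2)
    (hlip : ∀ t x y u, |ℓ t x u - ℓ t y u| ≤ c₂ * (1 + ‖u‖) * ‖x - y‖)
    (hgl : LipschitzWith Kg g)
    {u : ℝ → EuclideanSpace ℝ (Fin k)} {κ : ℝ}
    (hu : StronglyMeasurable u) (huκ : ∀ τ, ‖u τ‖ ≤ κ)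
    {t s : ℝ} (ht0 : 0 ≤ t) (hts : t ≤ s) (hsT : s ≤ T)
    {R : ℝ} (hR : 0 ≤ R) {y : EuclideanSpace ℝ (Fin d)} (hy : ‖y‖ ≤ R) :
    costFrom T A B ℓ g t y (fun τ => if τ ≤ s then 0 else u τ) - costFrom T A B ℓ g s y u ≤
      (c₁ + (c₂ * (1 + κ) * T + (Kg:ℝ)) *
        (‖A‖ * Real.exp (T * ‖A‖) * R + Real.exp (T * ‖A‖) * ‖B‖ * κ)) * (s - t) := by
  have hκ0 : 0 ≤ κ := (norm_nonneg _).trans (huκ 0)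
  set M := Real.exp (T * ‖A‖) with hM
  have hM0 : 0 < M := Real.exp_pos _
  set CT := ‖A‖ * M * R + M * ‖B‖ * κ with hCT
  have hCT0 : 0 ≤ CT := by positivity
  have hT0 : 0 ≤ T := ht0.trans (hts.trans hsT)
  have hst : (0:ℝ) ≤ s - t := sub_nonneg.2 hts
  set v : ℝ → EuclideanSpace ℝ (Fin k) := fun τ => if τ ≤ s then 0 else u τ with hv
  have hvsm : StronglyMeasurable v := by
    refine StronglyMeasurable.ite ?_ stronglyMeasurable_const hu
    exact measurableSet_Iic
  have hvκ : ∀ τ, ‖v τ‖ ≤ κ := by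
    intro τ
    rw [hv]
    by_cases h : τ ≤ s
    · simp [h, hκ0]
    · simp [h, huκ τ]
  -- trajectory identity
  have htraj2 : ∀ σ ∈ Icc s T, trajFrom A B t y v σ =
      NormedSpace.exp ((σ - t) • A) y +
        ∫ τ in Ioc s σ, NormedSpace.exp ((σ - τ) • A) (B (u τ)) := by
    intro σ hσ
    unfold trajFrom
    congr 1
    have habs : ∀ τ ∈ Ioc t σ, |σ - τ| ≤ T := by
      intro τ hτ
      rw [abs_of_nonneg (by linarith [hτ.2])]
      linarith [hτ.1, hσ.2]
    have hint1 : IntegrableOn (fun τ => NormedSpace.exp ((σ - τ) • A) (B (v τ))) (Ioc t s) :=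
      integrand_int A B hvsm hvκ fun τ hτ => habs τ ⟨hτ.1, hτ.2.trans hσ.1⟩
    have hint2 : IntegrableOn (fun τ => NormedSpace.exp ((σ - τ) • A) (B (v τ))) (Ioc s σ) :=
      integrand_int A B hvsm hvκ fun τ hτ => habs τ ⟨hts.trans_lt hτ.1, hτ.2⟩
    rw [show Ioc t σ = Ioc t s ∪ Ioc s σ from (Ioc_union_Ioc_eq_Ioc hts hσ.1).symm,
      setIntegral_union (Ioc_disjoint_Ioc_of_le le_rfl) measurableSet_Ioc hint1 hint2]
    have hz : (∫ τ in Ioc t s, NormedSpace.exp ((σ - τ) • A) (B (v τ))) = 0 := by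
      rw [setIntegral_congr_fun measurableSet_Ioc
        (fun τ hτ => ?_), integral_zero]
      show NormedSpace.exp ((σ - τ) • A) (B (v τ)) = 0
      rw [hv]
      simp [hτ.2]
    have hc : (∫ τ in Ioc s σ, NormedSpace.exp ((σ - τ) • A) (B (v τ))) =
        ∫ τ in Ioc s σ, NormedSpace.exp ((σ - τ) • A) (B (u τ)) := by
      refine setIntegral_congr_fun measurableSet_Ioc fun τ hτ => ?_
      have : ¬ τ ≤ s := not_le.2 hτ.1
      show NormedSpace.exp ((σ - τ) • A) (B (v τ)) = _
      rw [hv]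
      simp [this]
    rw [hz, hc, zero_add]
  -- trajectory difference bound
  have htraj : ∀ σ ∈ Icc s T,
      ‖trajFrom A B t y v σ - trajFrom A B s y u σ‖ ≤ CT * (s - t) := by
    intro σ hσ
    have : trajFrom A B t y v σ - trajFrom A B s y u σ =
        NormedSpace.exp ((σ - t) • A) y - NormedSpace.exp ((σ - s) • A) y := by
      rw [htraj2 σ hσ]
      unfold trajFrom
      rw [add_sub_add_right_eq_sub]
    rw [this]
    refine (exp_apply_sub_bound (A := A) ht0 hts hσ.1 hσ.2 hy hR).trans ?_
    refine mul_le_mul_of_nonneg_right ?_ hst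
    rw [hCT]
    nlinarith [mul_nonneg (mul_nonneg hM0.le (norm_nonneg (B : _ →L[ℝ] _))) hκ0]
  -- integrability
  have hintv := ell_integrand_integrable (A := A) (B := B) hcont hc₀ hc₁ hgrowth hvsm hvκ
    ht0 (hts.trans hsT) y
  have hints := ell_integrand_integrable (A := A) (B := B) hcont hc₀ hc₁ hgrowth hu huκ
    (ht0.trans hts) hsT y
  have hintv1 : IntegrableOn (fun σ => ℓ σ (trajFrom A B t y v σ) (v σ)) (Ioc t s) :=
    hintv.mono_set (Ioc_subset_Ioc_right hsT)
  have hintv2 : IntegrableOn (fun σ => ℓ σ (trajFrom A B t y v σ) (v σ)) (Ioc s T) :=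
    hintv.mono_set (Ioc_subset_Ioc_left hts)
  have hsplit : (∫ σ in Ioc t T, ℓ σ (trajFrom A B t y v σ) (v σ)) =
      (∫ σ in Ioc t s, ℓ σ (trajFrom A B t y v σ) (v σ)) +
        ∫ σ in Ioc s T, ℓ σ (trajFrom A B t y v σ) (v σ) := by
    rw [← setIntegral_union (Ioc_disjoint_Ioc_of_le le_rfl) measurableSet_Ioc hintv1 hintv2,
      Ioc_union_Ioc_eq_Ioc hts hsT]
  -- piece B1
  have hB1 : (∫ σ in Ioc t s, ℓ σ (trajFrom A B t y v σ) (v σ)) ≤ c₁ * (s - t) := by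
    have := key_int_le hts hintv1 (integrableOn_zero (s := Ioc t s))
      (fun σ hσ => ?_) hc₁
    · simpa using this
    · have hvz : v σ = 0 := by rw [hv]; simp [hσ.2]
      have := (hgrowth σ (trajFrom A B t y v σ) (v σ)).2
      rw [hvz] at this ⊢
      simpa using this.trans (by simp)
  -- piece B2
  have hB2 : (∫ σ in Ioc s T, ℓ σ (trajFrom A B t y v σ) (v σ)) -
      (∫ σ in Ioc s T, ℓ σ (trajFrom A B s y u σ) (u σ)) ≤
        (c₂ * (1 + κ) * (CT * (s - t))) * (T - s) := by
    refine key_int_le hsT hintv2 hints (fun σ hσ => ?_)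
      (mul_nonneg (mul_nonneg hc₂ (by linarith)) (mul_nonneg hCT0 hst))
    have hvu : v σ = u σ := by rw [hv]; simp [not_le.2 hσ.1]
    rw [hvu]
    refine (le_abs_self _).trans ((hlip σ _ _ _).trans ?_)
    have h1 : (1 + ‖u σ‖) ≤ 1 + κ := by linarith [huκ σ]
    exact mul_le_mul (mul_le_mul_of_nonneg_left h1 hc₂)
      (htraj σ (Ioc_subset_Icc_self hσ)) (norm_nonneg _) (by positivity)
  -- piece B3
  have hB3 : g (trajFrom A B t y v T) - g (trajFrom A B s y u T) ≤ (Kg:ℝ) * (CT * (s - t)) := by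
    refine (le_abs_self _).trans ?_
    rw [← Real.dist_eq]
    refine (hgl.dist_le_mul _ _).trans ?_
    rw [dist_eq_norm]
    exact mul_le_mul_of_nonneg_left (htraj T ⟨hsT, le_rfl⟩) (NNReal.coe_nonneg _)
  have hB2' : (∫ σ in Ioc s T, ℓ σ (trajFrom A B t y v σ) (v σ)) -
      (∫ σ in Ioc s T, ℓ σ (trajFrom A B s y u σ) (u σ)) ≤
        (c₂ * (1 + κ) * (CT * (s - t))) * T :=
    hB2.trans (mul_le_mul_of_nonneg_left (by linarith)
      (mul_nonneg (mul_nonneg hc₂ (by linarith)) (mul_nonneg hCT0 hst)))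
  have hring : (c₁ + (c₂ * (1 + κ) * T + (Kg:ℝ)) * CT) * (s - t) =
      (c₂ * (1 + κ) * (CT * (s - t))) * T + c₁ * (s - t) + (Kg:ℝ) * (CT * (s - t)) := by
    ring
  unfold costFrom
  rw [hsplit]
  linarith [hB1, hB2', hB3]

end cost3

section vf

variable {d k : ℕ} {A : EuclideanSpace ℝ (Fin d) →L[ℝ] EuclideanSpace ℝ (Fin d)}
  {B : EuclideanSpace ℝ (Fin k) →L[ℝ] EuclideanSpace ℝ (Fin d)}
  {ℓ : ℝ → EuclideanSpace ℝ (Fin d) → EuclideanSpace ℝ (Fin k) → ℝ}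
  {g : EuclideanSpace ℝ (Fin d) → ℝ}
  {c₀ c₁ c₂ : ℝ} {T : ℝ}

lemma costSet_lb (hc₀ : 0 < c₀) (hc₁ : 0 ≤ c₁)
    (hgrowth : ∀ t x u, c₀ * ‖u‖ ^ 2 - c₁ ≤ ℓ t x u ∧ ℓ t x u ≤ c₁ + (1 / c₀) * ‖u‖ ^ 2)
    {Mg : ℝ} (hgb : ∀ y, |g y| ≤ Mg) {t : ℝ} (ht : t ∈ Icc (0:ℝ) T)
    (x : EuclideanSpace ℝ (Fin d)) :
    ∀ val ∈ ((fun u => costFrom T A B ℓ g t x u) ''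
      {u : ℝ → EuclideanSpace ℝ (Fin k) | MemLp u 2 (volume.restrict (Set.Ioc t T))}),
      -(c₁ * T + Mg) ≤ val := by
  rintro val ⟨w, _, rfl⟩
  show -(c₁ * T + Mg) ≤ costFrom T A B ℓ g t x w
  unfold costFrom
  have hg := (abs_le.1 (hgb (trajFrom A B t x w T))).1
  have hint : -(c₁ * T) ≤ ∫ σ in Ioc t T, ℓ σ (trajFrom A B t x w σ) (w σ) := by
    by_cases hInt : Integrable (fun σ => ℓ σ (trajFrom A B t x w σ) (w σ))
        (volume.restrict (Ioc t T))
    · have h1 : (∫ _σ in Ioc t T, (-c₁ : ℝ)) ≤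
          ∫ σ in Ioc t T, ℓ σ (trajFrom A B t x w σ) (w σ) := by
        refine setIntegral_mono_on (integrableOn_const measure_Ioc_lt_top.ne) hInt
          measurableSet_Ioc (fun σ _ => ?_)
        nlinarith [(hgrowth σ (trajFrom A B t x w σ) (w σ)).1,
          mul_nonneg hc₀.le (sq_nonneg ‖w σ‖)]
      have h2 : (∫ _σ in Ioc t T, (-c₁ : ℝ)) = -c₁ * (T - t) := by
        rw [setIntegral_const, Real.volume_real_Ioc_of_le ht.2,
          smul_eq_mul]
        ring
      nlinarith [mul_nonneg hc₁ ht.1]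
    · rw [integral_undef hInt]
      nlinarith [mul_nonneg hc₁ (ht.1.trans ht.2)]
  linarith

lemma valueFun_le (hc₀ : 0 < c₀) (hc₁ : 0 ≤ c₁)
    (hgrowth : ∀ t x u, c₀ * ‖u‖ ^ 2 - c₁ ≤ ℓ t x u ∧ ℓ t x u ≤ c₁ + (1 / c₀) * ‖u‖ ^ 2)
    {Mg : ℝ} (hgb : ∀ y, |g y| ≤ Mg) {t : ℝ} (ht : t ∈ Icc (0:ℝ) T)
    (x : EuclideanSpace ℝ (Fin d)) {u : ℝ → EuclideanSpace ℝ (Fin k)}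
    (hu2 : MemLp u 2 (volume.restrict (Set.Ioc t T))) :
    valueFun T A B ℓ g t x ≤ costFrom T A B ℓ g t x u := by
  exact csInf_le ⟨-(c₁ * T + Mg), fun val h => costSet_lb hc₀ hc₁ hgrowth hgb ht x val h⟩
    (mem_image_of_mem _ hu2)

lemma nice_memℒp {t' T : ℝ} {u : ℝ → EuclideanSpace ℝ (Fin k)} {κ : ℝ}
    (hsm : StronglyMeasurable u) (huκ : ∀ τ, ‖u τ‖ ≤ κ) :
    MemLp u 2 (volume.restrict (Set.Ioc t' T)) := by
  haveI : IsFiniteMeasure (volume.restrict (Set.Ioc t' T)) :=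
    ⟨by rw [Measure.restrict_apply_univ]; exact measure_Ioc_lt_top⟩
  exact MemLp.of_bound hsm.aestronglyMeasurable.restrict κ (Filter.Eventually.of_forall huκ)

lemma exists_nice {t : ℝ} (htT : t ≤ T) {u : ℝ → EuclideanSpace ℝ (Fin k)} {κ : ℝ}
    (hκ0 : 0 ≤ κ) (hu2 : MemLp u 2 (volume.restrict (Set.Ioc t T)))
    (hb : ∀ᵐ σ ∂(volume.restrict (Set.Ioc t T)), ‖u σ‖ ≤ κ) :
    ∃ u' : ℝ → EuclideanSpace ℝ (Fin k), StronglyMeasurable u' ∧ (∀ τ, ‖u' τ‖ ≤ κ) ∧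
      ∀ x, costFrom T A B ℓ g t x u' = costFrom T A B ℓ g t x u := by
  have hsm := hu2.aestronglyMeasurable
  set w := hsm.mk u with hwdef
  have hw : StronglyMeasurable w := hsm.stronglyMeasurable_mk
  have heq : u =ᵐ[volume.restrict (Set.Ioc t T)] w := hsm.ae_eq_mk
  set u' : ℝ → EuclideanSpace ℝ (Fin k) := fun τ => if ‖w τ‖ ≤ κ then w τ else 0 with hu'def
  have hu'sm : StronglyMeasurable u' := by
    refine StronglyMeasurable.ite ?_ hw stronglyMeasurable_const
    exact measurableSet_le hw.norm.measurable measurable_const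
  have hu'κ : ∀ τ, ‖u' τ‖ ≤ κ := by
    intro τ
    rw [hu'def]
    by_cases h : ‖w τ‖ ≤ κ
    · simpa [h] using h
    · simp [h, hκ0]
  have hae : u' =ᵐ[volume.restrict (Set.Ioc t T)] u := by
    filter_upwards [heq, hb] with σ h1 h2
    have : ‖w σ‖ ≤ κ := by rw [← h1]; exact h2
    rw [hu'def]
    simp only [this, if_true]
    exact h1.symm
  refine ⟨u', hu'sm, hu'κ, fun x => ?_⟩
  have htraj : ∀ σ, σ ≤ T → trajFrom A B t x u' σ = trajFrom A B t x u σ := by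
    intro σ hσ
    unfold trajFrom
    congr 1
    have hae' : ∀ᵐ τ ∂(volume.restrict (Set.Ioc t σ)), u' τ = u τ :=
      ae_restrict_of_ae_restrict_of_subset (Ioc_subset_Ioc_right hσ) hae
    refine integral_congr_ae ?_
    filter_upwards [hae'] with τ hτ
    rw [hτ]
  unfold costFrom
  rw [htraj T le_rfl]
  congr 1
  refine integral_congr_ae ?_
  filter_upwards [hae, ae_restrict_mem measurableSet_Ioc] with σ h1 h2
  rw [h1, htraj σ h2.2]

end vf

theorem value_function_locally_lipschitz {d k : ℕ} (T : ℝ) (hT : 0 < T)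
    (A : EuclideanSpace ℝ (Fin d) →L[ℝ] EuclideanSpace ℝ (Fin d))
    (B : EuclideanSpace ℝ (Fin k) →L[ℝ] EuclideanSpace ℝ (Fin d))
    (c₀ c₁ c₂ : ℝ) (hc₀ : 0 < c₀) (hc₁ : 0 ≤ c₁) (hc₂ : 0 ≤ c₂)
    (ℓ : ℝ → EuclideanSpace ℝ (Fin d) → EuclideanSpace ℝ (Fin k) → ℝ)
    (hcont : Continuous fun p : ℝ × EuclideanSpace ℝ (Fin d) × EuclideanSpace ℝ (Fin k) =>
      ℓ p.1 p.2.1 p.2.2)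
    (hgrowth : ∀ t x u, c₀ * ‖u‖ ^ 2 - c₁ ≤ ℓ t x u ∧ ℓ t x u ≤ c₁ + (1 / c₀) * ‖u‖ ^ 2)
    (hlip : ∀ t x y u, |ℓ t x u - ℓ t y u| ≤ c₂ * (1 + ‖u‖) * ‖x - y‖)
    (g : EuclideanSpace ℝ (Fin d) → ℝ) (Mg : ℝ) (hgb : ∀ y, |g y| ≤ Mg)
    (Kg : NNReal) (hgl : LipschitzWith Kg g)
    (hattain : ∀ R > (0 : ℝ), ∃ κ ≥ (0 : ℝ), ∀ t ∈ Set.Icc (0 : ℝ) T,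
      ∀ x : EuclideanSpace ℝ (Fin d), ‖x‖ ≤ R →
        ∃ u : ℝ → EuclideanSpace ℝ (Fin k),
          MemLp u 2 (volume.restrict (Set.Ioc t T)) ∧
          (∀ᵐ s ∂(volume.restrict (Set.Ioc t T)), ‖u s‖ ≤ κ) ∧
          costFrom T A B ℓ g t x u = valueFun T A B ℓ g t x) :
    ∀ R > (0 : ℝ), ∃ C ≥ (0 : ℝ), ∀ t ∈ Set.Icc (0 : ℝ) T, ∀ s ∈ Set.Icc (0 : ℝ) T,
      ∀ x y : EuclideanSpace ℝ (Fin d), ‖x‖ ≤ R → ‖y‖ ≤ R →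
        |valueFun T A B ℓ g t x - valueFun T A B ℓ g s y| ≤
          C * (‖x - y‖ + |t - s|) := by
  intro R hR
  obtain ⟨κ, hκ0, hopt⟩ := hattain R hR
  have hT0 : (0:ℝ) ≤ T := hT.le
  set M := Real.exp (T * ‖A‖) with hM
  have hM0 : 0 < M := Real.exp_pos _
  set CT := ‖A‖ * M * R + M * ‖B‖ * κ with hCT
  have hCT0 : 0 ≤ CT := by
    refine add_nonneg (mul_nonneg (mul_nonneg (norm_nonneg _) hM0.le) hR.le) ?_
    exact mul_nonneg (mul_nonneg hM0.le (norm_nonneg _)) hκ0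
  have hfac : 0 ≤ c₂ * (1 + κ) * T + (Kg:ℝ) :=
    add_nonneg (mul_nonneg (mul_nonneg hc₂ (by linarith)) hT0) (NNReal.coe_nonneg _)
  set D1 := (c₂ * (1 + κ) * T + (Kg:ℝ)) * M with hD1def
  set D2 := c₁ + (c₂ * (1 + κ) * T + (Kg:ℝ)) * CT with hD2def
  have hD1 : 0 ≤ D1 := mul_nonneg hfac hM0.le
  have hD2 : 0 ≤ D2 := add_nonneg hc₁ (mul_nonneg hfac hCT0)
  -- nice optimal controls
  have hniceopt : ∀ t' ∈ Icc (0:ℝ) T, ∀ z : EuclideanSpace ℝ (Fin d), ‖z‖ ≤ R →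
      ∃ u' : ℝ → EuclideanSpace ℝ (Fin k), StronglyMeasurable u' ∧ (∀ τ, ‖u' τ‖ ≤ κ) ∧
        costFrom T A B ℓ g t' z u' = valueFun T A B ℓ g t' z := by
    intro t' ht' z hz
    obtain ⟨u, hu2, hub, hucost⟩ := hopt t' ht' z hz
    obtain ⟨u', hsm, hκ', hcost⟩ := exists_nice (g := g) (A := A) (B := B) (ℓ := ℓ)
      ht'.2 hκ0 hu2 hub
    exact ⟨u', hsm, hκ', by rw [hcost z, hucost]⟩
  -- space regularity
  have hspace : ∀ t' ∈ Icc (0:ℝ) T, ∀ z w : EuclideanSpace ℝ (Fin d), ‖z‖ ≤ R → ‖w‖ ≤ R →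
      valueFun T A B ℓ g t' z - valueFun T A B ℓ g t' w ≤ D1 * ‖z - w‖ := by
    intro t' ht' z w hz hw
    obtain ⟨u', hsm, hκ', hopt'⟩ := hniceopt t' ht' w hw
    have h1 : valueFun T A B ℓ g t' z ≤ costFrom T A B ℓ g t' z u' :=
      valueFun_le hc₀ hc₁ hgrowth hgb ht' z (nice_memℒp hsm hκ')
    have h2 := cost_diff_x (A := A) (B := B) (g := g) hcont hc₀ hc₁ hc₂ hgrowth hlip hgl hsm hκ' ht' z w
    rw [hopt', ← hM, ← hD1def] at h2
    linarith
  -- time regularity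
  have htime : ∀ t' s' : ℝ, 0 ≤ t' → t' ≤ s' → s' ≤ T → ∀ z : EuclideanSpace ℝ (Fin d),
      ‖z‖ ≤ R → |valueFun T A B ℓ g t' z - valueFun T A B ℓ g s' z| ≤ D2 * (s' - t') := by
    intro t' s' ht0' hts' hsT' z hz
    have ht' : t' ∈ Icc (0:ℝ) T := ⟨ht0', hts'.trans hsT'⟩
    have hs' : s' ∈ Icc (0:ℝ) T := ⟨ht0'.trans hts', hsT'⟩
    rw [abs_sub_le_iff]
    constructor
    · -- V t' z - V s' z ≤ D2 (s' - t'), via modified optimal control at (s', z)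
      obtain ⟨u, hsm, hκ', hopt'⟩ := hniceopt s' hs' z hz
      have hvsm : StronglyMeasurable
          (fun τ => if τ ≤ s' then (0 : EuclideanSpace ℝ (Fin k)) else u τ) :=
        StronglyMeasurable.ite measurableSet_Iic stronglyMeasurable_const hsm
      have hvκ : ∀ τ, ‖(fun τ => if τ ≤ s' then (0 : EuclideanSpace ℝ (Fin k)) else u τ) τ‖
          ≤ κ := by
        intro τ
        by_cases h : τ ≤ s'
        · simp [h, hκ0]
        · simp only [h, if_false]
          exact hκ' τ
      have h1 : valueFun T A B ℓ g t' z ≤ costFrom T A B ℓ g t' z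
          (fun τ => if τ ≤ s' then 0 else u τ) :=
        valueFun_le hc₀ hc₁ hgrowth hgb ht' z (nice_memℒp hvsm hvκ)
      have h2 := cost_diff_time_A (A := A) (B := B) (g := g) hcont hc₀ hc₁ hc₂ hgrowth hlip hgl hsm hκ'
        ht0' hts' hsT' hR.le hz
      rw [hopt', ← hM, ← hCT, ← hD2def] at h2
      linarith
    · -- V s' z - V t' z ≤ D2 (s' - t'), via optimal control at (t', z)
      obtain ⟨u, hsm, hκ', hopt'⟩ := hniceopt t' ht' z hz
      have h1 : valueFun T A B ℓ g s' z ≤ costFrom T A B ℓ g s' z u :=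
        valueFun_le hc₀ hc₁ hgrowth hgb hs' z (nice_memℒp hsm hκ')
      have h2 := cost_diff_time_B (A := A) (B := B) (g := g) hcont hc₀ hc₁ hc₂ hgrowth hlip hgl hsm hκ'
        ht0' hts' hsT' hR.le hz
      rw [hopt', ← hM, ← hCT, ← hD2def] at h2
      linarith
  refine ⟨D1 + D2, by linarith, ?_⟩
  intro t ht s hs x y hx hy
  have hxy : (0:ℝ) ≤ ‖x - y‖ := norm_nonneg _
  have hts0 : (0:ℝ) ≤ |t - s| := abs_nonneg _
  have hspaceabs : ∀ t' ∈ Icc (0:ℝ) T,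
      |valueFun T A B ℓ g t' x - valueFun T A B ℓ g t' y| ≤ D1 * ‖x - y‖ := by
    intro t' ht'
    rw [abs_sub_le_iff]
    refine ⟨hspace t' ht' x y hx hy, ?_⟩
    have := hspace t' ht' y x hy hx
    rwa [norm_sub_rev] at this
  rcases le_total t s with hc | hc
  · have h1 := hspaceabs t ht
    have h2 := htime t s ht.1 hc hs.2 y hy
    have habs : |t - s| = s - t := by rw [abs_sub_comm]; exact abs_of_nonneg (by linarith)
    calc |valueFun T A B ℓ g t x - valueFun T A B ℓ g s y|
        ≤ |valueFun T A B ℓ g t x - valueFun T A B ℓ g t y| +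
          |valueFun T A B ℓ g t y - valueFun T A B ℓ g s y| := abs_sub_le _ _ _
      _ ≤ D1 * ‖x - y‖ + D2 * (s - t) := add_le_add h1 h2
      _ ≤ (D1 + D2) * (‖x - y‖ + |t - s|) := by
          rw [habs]
          nlinarith [mul_nonneg hD1 (sub_nonneg.2 hc), mul_nonneg hD2 hxy]
  · have h1 := hspaceabs s hs
    have h2 := htime s t hs.1 hc ht.2 x hx
    have habs : |t - s| = t - s := abs_of_nonneg (by linarith)
    calc |valueFun T A B ℓ g t x - valueFun T A B ℓ g s y|
        ≤ |valueFun T A B ℓ g t x - valueFun T A B ℓ g s x| +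
          |valueFun T A B ℓ g s x - valueFun T A B ℓ g s y| := abs_sub_le _ _ _
      _ ≤ D2 * (t - s) + D1 * ‖x - y‖ := by
          refine add_le_add ?_ h1
          have := h2
          rwa [abs_sub_comm] at this
      _ ≤ (D1 + D2) * (‖x - y‖ + |t - s|) := by
          rw [habs]
          nlinarith [mul_nonneg hD2 (sub_nonneg.2 hc), mul_nonneg hD1 hts0]
end

section
/- Let H : [0,T] × ℝᵈ × ℝᵈ → ℝ be differentiable in (x,p) with |D_pH(t,x,p)| ≤ c₂(1 + |x| + |p|) and ⟨D_xH(t,x,p), p⟩ ≥ c₃|p|² − c₄ for all (t,x,p), where c₂, c₄ ≥ 0 and c₃ > 0. Let γ, p : [0,T] → ℝᵈ be differentiable curves satisfying the Hamiltonian system γ′(t) = −D_pH(t, γ(t), p(t)) and p′(t) = D_xH(t, γ(t), p(t)) for all t ∈ [0,T], and suppose |p(T)| ≤ M and sup_{t∈[0,T]} |γ(t)| ≤ C̃(1 + |γ(0)|). Then there exists a constant Q ≥ 0, depending only on c₂, c₃, c₄, M and C̃, such that sup_{t∈[0,T]} |γ′(t)| ≤ Q(1 + |γ(0)|). -/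
/- STATEMENT 14: uniformly bounded velocities of optimal trajectories
(Proposition `boundedvelocity`), via the Hamiltonian system and assumption (H1). -/

open scoped RealInnerProductSpace

theorem bounded_velocity_of_hamiltonian_system {d : ℕ} (T : ℝ) (hT : 0 < T)
    (c₂ c₃ c₄ M Ctilde : ℝ) (hc₂ : 0 ≤ c₂) (hc₃ : 0 < c₃) (hc₄ : 0 ≤ c₄)
    (hM : 0 ≤ M) (hCt : 0 ≤ Ctilde)
    (H : ℝ → EuclideanSpace ℝ (Fin d) → EuclideanSpace ℝ (Fin d) → ℝ)
    (Hx Hp : ℝ → EuclideanSpace ℝ (Fin d) → EuclideanSpace ℝ (Fin d) →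
      EuclideanSpace ℝ (Fin d))
    (hgradx : ∀ t x p, HasGradientAt (fun y => H t y p) (Hx t x p) x)
    (hgradp : ∀ t x p, HasGradientAt (fun q => H t x q) (Hp t x p) p)
    (hHp : ∀ t x p, ‖Hp t x p‖ ≤ c₂ * (1 + ‖x‖ + ‖p‖))
    (hHx : ∀ t x p, c₃ * ‖p‖ ^ 2 - c₄ ≤ ⟪Hx t x p, p⟫) :
    ∃ Q ≥ (0 : ℝ), ∀ γ p : ℝ → EuclideanSpace ℝ (Fin d),
      (∀ t ∈ Set.Icc (0 : ℝ) T, HasDerivAt γ (-(Hp t (γ t) (p t))) t) →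
      (∀ t ∈ Set.Icc (0 : ℝ) T, HasDerivAt p (Hx t (γ t) (p t)) t) →
      ‖p T‖ ≤ M →
      (∀ t ∈ Set.Icc (0 : ℝ) T, ‖γ t‖ ≤ Ctilde * (1 + ‖γ 0‖)) →
      ∀ t ∈ Set.Icc (0 : ℝ) T, ‖deriv γ t‖ ≤ Q * (1 + ‖γ 0‖) := by
  have hsq : (0:ℝ) ≤ Real.sqrt (c₄ / c₃) := Real.sqrt_nonneg _
  refine ⟨c₂ * (1 + Ctilde + (M + Real.sqrt (c₄ / c₃))), by positivity, ?_⟩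
  intro γ p hγ hp hpT hγb t ht
  -- derivative of ⟪p s, p s⟫
  have hφ : ∀ s ∈ Set.Icc (0 : ℝ) T,
      HasDerivAt (fun s => ⟪p s, p s⟫) (2 * ⟪Hx s (γ s) (p s), p s⟫) s := by
    intro s hs
    have h := (hp s hs).inner ℝ (hp s hs)
    refine h.congr_deriv ?_
    rw [real_inner_comm (p s)]
    ring
  set ψ : ℝ → ℝ := fun s => Real.exp (-(2 * c₃) * s) * (⟪p s, p s⟫ - c₄ / c₃) with hψdef
  have hψ : ∀ s ∈ Set.Icc (0 : ℝ) T,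
      HasDerivAt ψ (Real.exp (-(2 * c₃) * s) *
        (2 * ⟪Hx s (γ s) (p s), p s⟫ - (2 * c₃) * (⟪p s, p s⟫ - c₄ / c₃))) s := by
    intro s hs
    have h1 : HasDerivAt (fun s : ℝ => Real.exp (-(2 * c₃) * s))
        (Real.exp (-(2 * c₃) * s) * (-(2 * c₃))) s := by
      simpa using ((hasDerivAt_id s).const_mul (-(2 * c₃))).exp
    have h2 := ((hφ s hs).sub_const (c₄ / c₃))
    have := h1.mul h2
    refine this.congr_deriv ?_
    ring
  have hψnn : ∀ s ∈ Set.Icc (0 : ℝ) T,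
      0 ≤ Real.exp (-(2 * c₃) * s) *
        (2 * ⟪Hx s (γ s) (p s), p s⟫ - (2 * c₃) * (⟪p s, p s⟫ - c₄ / c₃)) := by
    intro s hs
    apply mul_nonneg (Real.exp_nonneg _)
    have h1 := hHx s (γ s) (p s)
    have h2 : ⟪p s, p s⟫ = ‖p s‖ ^ 2 := real_inner_self_eq_norm_sq _
    rw [h2]
    have h3 : (2 * c₃) * (c₄ / c₃) = 2 * c₄ := by field_simp
    nlinarith [h1]
  have mono : MonotoneOn ψ (Set.Icc (0 : ℝ) T) := by
    apply monotoneOn_of_deriv_nonneg (convex_Icc 0 T)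
    · exact fun s hs => (hψ s hs).continuousAt.continuousWithinAt
    · intro s hs
      rw [interior_Icc] at hs
      exact ((hψ s (Set.Ioo_subset_Icc_self hs)).differentiableAt).differentiableWithinAt
    · intro s hs
      rw [interior_Icc] at hs
      rw [(hψ s (Set.Ioo_subset_Icc_self hs)).deriv]
      exact hψnn s (Set.Ioo_subset_Icc_self hs)
  have hTmem : T ∈ Set.Icc (0 : ℝ) T := ⟨le_of_lt hT, le_refl T⟩
  have hψle : ψ t ≤ ψ T := mono ht hTmem ht.2
  have hinner_t : ⟪p t, p t⟫ = ‖p t‖ ^ 2 := real_inner_self_eq_norm_sq _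
  have hinner_T : ⟪p T, p T⟫ = ‖p T‖ ^ 2 := real_inner_self_eq_norm_sq _
  -- deduce ‖p t‖ ≤ M + sqrt(c₄/c₃)
  have hpb : ‖p t‖ ≤ M + Real.sqrt (c₄ / c₃) := by
    by_cases hcase : ‖p t‖ ^ 2 ≤ c₄ / c₃
    · have h := Real.sqrt_le_sqrt hcase
      rw [Real.sqrt_sq (norm_nonneg _)] at h
      linarith
    · push_neg at hcase
      have hψtpos : 0 < ψ t := by
        have hpos : 0 < ⟪p t, p t⟫ - c₄ / c₃ := by rw [hinner_t]; linarith
        exact mul_pos (Real.exp_pos _) hpos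
      have hψTpos : 0 < ψ T := lt_of_lt_of_le hψtpos hψle
      have hexp_le : Real.exp (-(2 * c₃) * T) ≤ Real.exp (-(2 * c₃) * t) := by
        apply Real.exp_le_exp.mpr
        nlinarith [ht.2, hc₃]
      have hTfac : 0 ≤ ⟪p T, p T⟫ - c₄ / c₃ := by
        by_contra hneg
        push_neg at hneg
        have : ψ T < 0 := mul_neg_of_pos_of_neg (Real.exp_pos _) hneg
        linarith
      have key : ⟪p t, p t⟫ - c₄ / c₃ ≤ ⟪p T, p T⟫ - c₄ / c₃ := by
        have h1 : Real.exp (-(2 * c₃) * t) * (⟪p t, p t⟫ - c₄ / c₃)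
            ≤ Real.exp (-(2 * c₃) * T) * (⟪p T, p T⟫ - c₄ / c₃) := hψle
        have h2 : Real.exp (-(2 * c₃) * T) * (⟪p T, p T⟫ - c₄ / c₃)
            ≤ Real.exp (-(2 * c₃) * t) * (⟪p T, p T⟫ - c₄ / c₃) :=
          mul_le_mul_of_nonneg_right hexp_le hTfac
        exact le_of_mul_le_mul_left (h1.trans h2) (Real.exp_pos _)
      have hsqle : ‖p t‖ ^ 2 ≤ M ^ 2 := by
        rw [hinner_t, hinner_T] at key
        nlinarith [hpT, norm_nonneg (p T)]
      have : ‖p t‖ ≤ M := by nlinarith [norm_nonneg (p t)]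
      linarith
  -- conclude
  have hderiv : deriv γ t = -(Hp t (γ t) (p t)) := (hγ t ht).deriv
  rw [hderiv, norm_neg]
  have h1 := hHp t (γ t) (p t)
  have h2 := hγb t ht
  have h3 : (0:ℝ) ≤ ‖γ 0‖ := norm_nonneg _
  calc ‖Hp t (γ t) (p t)‖ ≤ c₂ * (1 + ‖γ t‖ + ‖p t‖) := h1
    _ ≤ c₂ * (1 + Ctilde * (1 + ‖γ 0‖) + (M + Real.sqrt (c₄ / c₃))) := by
        apply mul_le_mul_of_nonneg_left _ hc₂
        linarith
    _ ≤ c₂ * (1 + Ctilde + (M + Real.sqrt (c₄ / c₃))) * (1 + ‖γ 0‖) := by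
        nlinarith [mul_nonneg hc₂ h3, mul_nonneg (mul_nonneg hc₂ h3) hsq,
          mul_nonneg (mul_nonneg hc₂ h3) hM]
end
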